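/- Let Φ be irreducible and α ∈ Π. The number of roots in Φ_{α,1} = {γ ∈ Φ : c_α(γ)=1} having the same length as α equals |W⟨Π\{α}⟩| / |W⟨Π\Ñ[α]⟩|, where Ñ[α] = {α} ∪ {ε ∈ Π\{α} : (ε,α) ≠ 0}. -/

import Mathlib

open scoped RealInnerProductSpace
attribute [local instance] Classical.propDecidable

variable {E : Type*} [NormedAddCommGroup E] [InnerProductSpace ℝ E] [FiniteDimensional ℝ E]

/-- A finite reduced crystallographic root system spanning `E`. -/
structure IsRootSystem (Φ : Finset E) : Prop where
  nonzero : ∀ γ ∈ Φ, γ ≠ (0 : E)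
  span_top : Submodule.span ℝ (Φ : Set E) = ⊤
  reduced : ∀ γ ∈ Φ, ∀ t : ℝ, t • γ ∈ Φ → t = 1 ∨ t = -1
  reflect : ∀ γ ∈ Φ, ∀ δ ∈ Φ, δ - (2 * ⟪δ, γ⟫ / ⟪γ, γ⟫) • γ ∈ Φ
  cry : ∀ γ ∈ Φ, ∀ δ ∈ Φ, ∃ n : ℤ, 2 * ⟪δ, γ⟫ / ⟪γ, γ⟫ = (n : ℝ)

/-- `Δ` is a simple system (base) for `Φ`, and `c γ a` is the coordinate of `γ`
on the simple root `a`. -/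
structure IsBase (Φ Δ : Finset E) (c : E → E → ℝ) : Prop where
  subset : Δ ⊆ Φ
  indep : LinearIndependent ℝ (fun x : (Δ : Set E) => (x : E))
  repr : ∀ γ ∈ Φ, γ = ∑ a ∈ Δ, c γ a • a
  int : ∀ γ ∈ Φ, ∀ a ∈ Δ, ∃ n : ℤ, c γ a = (n : ℝ)
  sign : ∀ γ ∈ Φ, (∀ a ∈ Δ, 0 ≤ c γ a) ∨ (∀ a ∈ Δ, c γ a ≤ 0)

/-- Irreducibility: no splitting into two nonempty mutually orthogonal parts. -/
def IsIrredSys (Φ : Finset E) : Prop :=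
  ∀ s : Set E, s ⊆ (Φ : Set E) → (∀ x ∈ s, ∀ y ∈ (Φ : Set E) \ s, ⟪x, y⟫ = 0) →
    s = ∅ ∨ s = (Φ : Set E)

/-- The reflection through the hyperplane orthogonal to `γ`. -/
noncomputable def sref (γ : E) : E ≃ₗᵢ[ℝ] E := Submodule.reflection (Submodule.span ℝ {γ})ᗮ

/-- The Weyl group, generated by the reflections in the roots. -/
noncomputable def weyl (Φ : Finset E) : Subgroup (E ≃ₗᵢ[ℝ] E) :=
  Subgroup.closure {g | ∃ γ ∈ Φ, g = sref γ}

set_option linter.unusedSectionVars false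
set_option linter.unusedVariables false
set_option maxHeartbeats 1000000

noncomputable instance : MulAction (E ≃ₗᵢ[ℝ] E) E where
  smul g x := g x
  one_smul x := rfl
  mul_smul g h x := rfl

lemma st18_smul_def (g : E ≃ₗᵢ[ℝ] E) (x : E) : g • x = g x := rfl

theorem sref_apply (γ x : E) : sref γ x = x - (2 * ⟪x, γ⟫ / ⟪γ, γ⟫) • γ := by
  have : (((Submodule.span ℝ {γ}).starProjection x : E)) = (⟪γ, x⟫ / ((‖γ‖:ℝ) ^ 2)) • γ :=
    Submodule.starProjection_singleton ℝ x
  rw [sref, Submodule.reflection_apply, Submodule.starProjection_orthogonal,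
    ContinuousLinearMap.sub_apply, ContinuousLinearMap.id_apply]
  push_cast [this]
  rw [real_inner_self_eq_norm_sq, real_inner_comm]
  rw [two_smul]
  module

lemma sref_sq (γ : E) : sref γ * sref γ = 1 := by
  ext x
  exact Submodule.reflection_involutive _ x

lemma sref_inv (γ : E) : (sref γ)⁻¹ = sref γ :=
  inv_eq_of_mul_eq_one_left (sref_sq γ)

lemma sref_conj (g : E ≃ₗᵢ[ℝ] E) (γ : E) : sref (g γ) = g * sref γ * g⁻¹ := by
  ext x
  show sref (g γ) x = g (sref γ (g.symm x))
  rw [sref_apply, sref_apply, map_sub, LinearIsometryEquiv.map_smul,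
    g.apply_symm_apply, ← g.inner_map_map (g.symm x) γ, g.apply_symm_apply,
    ← g.inner_map_map γ γ]

lemma sref_self (γ : E) (h : γ ≠ 0) : sref γ γ = -γ := by
  rw [sref_apply]
  have h2 : ⟪γ, γ⟫ ≠ (0:ℝ) := inner_self_ne_zero.mpr h
  rw [mul_div_assoc, div_self h2, mul_one, two_smul]
  abel

section
variable {Φ Δ : Finset E} {c : E → E → ℝ}

lemma coords_eq (hB : IsBase Φ Δ c) {f g : E → ℝ}
    (h : ∑ a ∈ Δ, f a • a = ∑ a ∈ Δ, g a • a) {a : E} (ha : a ∈ Δ) : f a = g a := by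
  have h2 : ∑ a ∈ Δ, (f a - g a) • a = 0 := by
    simp only [sub_smul, Finset.sum_sub_distrib, h, sub_self]
  have li := linearIndependent_iff'.mp hB.indep
  have h3 : ∑ x ∈ (Δ.attach : Finset {x // x ∈ (Δ : Set E)}), (f x.1 - g x.1) • (x.1 : E) = 0 := by
    rw [Finset.sum_attach Δ (fun a => (f a - g a) • a)]; exact h2
  have := li Δ.attach (fun x => f x.1 - g x.1) h3 ⟨a, ha⟩ (Finset.mem_attach _ _)
  exact sub_eq_zero.mp this

def PosR (Δ : Finset E) (c : E → E → ℝ) (γ : E) : Prop := ∀ a ∈ Δ, 0 ≤ c γ a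
def NegR (Δ : Finset E) (c : E → E → ℝ) (γ : E) : Prop := ∀ a ∈ Δ, c γ a ≤ 0

lemma c_eq_of_repr (hB : IsBase Φ Δ c) {γ : E} (hγ : γ ∈ Φ) {f : E → ℝ}
    (h : γ = ∑ a ∈ Δ, f a • a) {a : E} (ha : a ∈ Δ) : c γ a = f a :=
  coords_eq hB (((hB.repr γ hγ).symm.trans h) ▸ rfl) ha

lemma root_inner_self_ne (hΦ : IsRootSystem Φ) {γ : E} (hγ : γ ∈ Φ) : ⟪γ, γ⟫ ≠ (0:ℝ) :=
  inner_self_ne_zero.mpr (hΦ.nonzero γ hγ)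

lemma neg_mem (hΦ : IsRootSystem Φ) {γ : E} (hγ : γ ∈ Φ) : -γ ∈ Φ := by
  have := hΦ.reflect γ hγ γ hγ
  rwa [mul_div_assoc, div_self (root_inner_self_ne hΦ hγ), mul_one, two_smul,
    show γ - (γ + γ) = -γ by abel] at this

lemma sref_root_mem (hΦ : IsRootSystem Φ) {γ δ : E} (hγ : γ ∈ Φ) (hδ : δ ∈ Φ) :
    sref γ δ ∈ Φ := by
  rw [sref_apply]
  exact hΦ.reflect γ hγ δ hδ

lemma word_root_mem (hΦ : IsRootSystem Φ) {l : List E} (hl : ∀ b ∈ l, b ∈ Φ)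
    {γ : E} (hγ : γ ∈ Φ) : (l.map sref).prod γ ∈ Φ := by
  induction l with
  | nil => simpa using hγ
  | cons b t ih =>
    have h1 : ((b :: t).map sref).prod = sref b * (t.map sref).prod := by
      simp [List.map_cons, List.prod_cons]
    rw [h1]
    have := ih (fun x hx => hl x (List.mem_cons_of_mem b hx))
    exact sref_root_mem hΦ (hl b (List.mem_cons_self)) this

lemma c_simple (hB : IsBase Φ Δ c) {a b : E} (ha : a ∈ Δ) (hb : b ∈ Δ) :
    c a b = if b = a then 1 else 0 := by
  have h : a = ∑ x ∈ Δ, (if x = a then (1:ℝ) else 0) • x := by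
    simp [ite_smul, ha]
  exact (c_eq_of_repr hB (hB.subset ha) h hb).trans (by simp)

lemma c_sref (hΦ : IsRootSystem Φ) (hB : IsBase Φ Δ c) {β γ a : E} (hβ : β ∈ Δ) (hγ : γ ∈ Φ)
    (ha : a ∈ Δ) :
    c (sref β γ) a = c γ a - (if a = β then 2 * ⟪γ, β⟫ / ⟪β, β⟫ else 0) := by
  have hrepr : sref β γ = ∑ x ∈ Δ, (c γ x - (if x = β then 2 * ⟪γ, β⟫ / ⟪β, β⟫ else 0)) • x := by
    rw [sref_apply]
    simp only [sub_smul, Finset.sum_sub_distrib, ite_smul, zero_smul,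
      Finset.sum_ite_eq' Δ β (fun x => (2 * ⟪γ, β⟫ / ⟪β, β⟫) • x), if_pos hβ]
    rw [← hB.repr γ hγ]
  exact c_eq_of_repr hB (sref_root_mem hΦ (hB.subset hβ) hγ) hrepr ha

lemma c_neg (hΦ : IsRootSystem Φ) (hB : IsBase Φ Δ c) {γ a : E} (hγ : γ ∈ Φ) (ha : a ∈ Δ) :
    c (-γ) a = - c γ a := by
  have hrepr : -γ = ∑ x ∈ Δ, (- c γ x) • x := by
    conv_lhs => rw [hB.repr γ hγ]
    rw [← Finset.sum_neg_distrib]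
    exact Finset.sum_congr rfl fun x _ => (neg_smul _ _).symm
  exact c_eq_of_repr hB (neg_mem hΦ hγ) hrepr ha

lemma exists_coord_ne (hΦ : IsRootSystem Φ) (hB : IsBase Φ Δ c) {γ : E} (hγ : γ ∈ Φ) :
    ∃ a ∈ Δ, c γ a ≠ 0 := by
  by_contra h
  push_neg at h
  apply hΦ.nonzero γ hγ
  rw [hB.repr γ hγ]
  exact Finset.sum_eq_zero fun a ha => by rw [h a ha, zero_smul]

lemma not_pos_and_neg (hΦ : IsRootSystem Φ) (hB : IsBase Φ Δ c) {γ : E} (hγ : γ ∈ Φ)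
    (hp : PosR Δ c γ) (hn : NegR Δ c γ) : False := by
  obtain ⟨a, ha, hne⟩ := exists_coord_ne hΦ hB hγ
  exact hne (le_antisymm (hn a ha) (hp a ha))

lemma pos_of_coord_pos (hΦ : IsRootSystem Φ) (hB : IsBase Φ Δ c) {γ a : E} (hγ : γ ∈ Φ)
    (ha : a ∈ Δ) (h : 0 < c γ a) : PosR Δ c γ := by
  rcases hB.sign γ hγ with hp | hn
  · exact hp
  · exact absurd (hn a ha) (not_le.mpr h)

lemma simple_pos (hB : IsBase Φ Δ c) {β : E} (hβ : β ∈ Δ) : PosR Δ c β := by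
  intro a ha
  rw [c_simple hB hβ ha]
  split <;> norm_num

lemma simple_not_neg (hB : IsBase Φ Δ c) {β : E} (hβ : β ∈ Δ) : ¬ NegR Δ c β := by
  intro h
  have := h β hβ
  rw [c_simple hB hβ hβ, if_pos rfl] at this
  linarith

lemma inner_simple_nonpos (hΦ : IsRootSystem Φ) (hB : IsBase Φ Δ c) {a b : E}
    (ha : a ∈ Δ) (hb : b ∈ Δ) (hne : b ≠ a) : ⟪a, b⟫ ≤ 0 := by
  by_contra h
  push_neg at h
  have haΦ := hB.subset ha
  have hbΦ := hB.subset hb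
  have hk : 0 < 2 * ⟪b, a⟫ / ⟪a, a⟫ := by
    apply div_pos
    · rw [real_inner_comm]; linarith
    · exact lt_of_le_of_ne real_inner_self_nonneg (Ne.symm (root_inner_self_ne hΦ haΦ))
  have h1 : c (sref a b) b = 1 := by
    rw [c_sref hΦ hB ha hbΦ hb, if_neg hne, c_simple hB hb hb, if_pos rfl, sub_zero]
  have h2 : c (sref a b) a = - (2 * ⟪b, a⟫ / ⟪a, a⟫) := by
    rw [c_sref hΦ hB ha hbΦ ha, if_pos rfl, c_simple hB hb ha, if_neg (Ne.symm hne), zero_sub]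
  rcases hB.sign _ (sref_root_mem hΦ haΦ hbΦ) with hp | hn
  · have := hp a ha; rw [h2] at this; linarith
  · have := hn b hb; rw [h1] at this; linarith

lemma sref_simple_pos (hΦ : IsRootSystem Φ) (hB : IsBase Φ Δ c) {β γ : E} (hβ : β ∈ Δ)
    (hγ : γ ∈ Φ) (hp : PosR Δ c γ) (hne : γ ≠ β) : PosR Δ c (sref β γ) := by
  by_cases hex : ∃ a ∈ Δ, a ≠ β ∧ 0 < c γ a
  · obtain ⟨a, ha, haβ, hpos⟩ := hex
    apply pos_of_coord_pos hΦ hB (sref_root_mem hΦ (hB.subset hβ) hγ) ha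
    rw [c_sref hΦ hB hβ hγ ha, if_neg haβ, sub_zero]
    exact hpos
  · push_neg at hex
    exfalso
    have hzero : ∀ a ∈ Δ, a ≠ β → c γ a = 0 := fun a ha hne' =>
      le_antisymm (hex a ha hne') (hp a ha)
    have hγβ : γ = c γ β • β := by
      conv_lhs => rw [hB.repr γ hγ]
      exact Finset.sum_eq_single β (fun b hb hbne => by rw [hzero b hb hbne, zero_smul])
        (fun hβ' => absurd hβ hβ')
    have := hΦ.reduced β (hB.subset hβ) (c γ β) (by rw [← hγβ]; exact hγ)
    rcases this with h1 | h1
    · apply hne; rw [hγβ, h1, one_smul]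
    · have := hp β hβ; rw [h1] at this; linarith

lemma word_inv : ∀ l : List E, ((l.map sref).prod)⁻¹ = (l.reverse.map sref).prod := by
  intro l
  induction l with
  | nil => simp
  | cons b t ih =>
    simp only [List.map_cons, List.prod_cons, mul_inv_rev, List.reverse_cons, List.map_append,
      List.prod_append, List.map_cons, List.prod_cons, List.map_nil, List.prod_nil, ih, sref_inv,
      mul_one]

lemma word_norm (l : List E) (γ : E) : ‖(l.map sref).prod γ‖ = ‖γ‖ :=
  ((l.map sref).prod).norm_map γ

lemma c_word (hΦ : IsRootSystem Φ) (hB : IsBase Φ Δ c) {α : E} (hα : α ∈ Δ) :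
    ∀ l : List E, (∀ b ∈ l, b ∈ Δ ∧ b ≠ α) → ∀ γ ∈ Φ, c ((l.map sref).prod γ) α = c γ α := by
  intro l
  induction l with
  | nil => intro _ γ hγ; simp
  | cons b t ih =>
    intro hl γ hγ
    obtain ⟨hbΔ, hbα⟩ := hl b (List.mem_cons_self)
    have ht := fun x hx => hl x (List.mem_cons_of_mem b hx)
    have htγ : (t.map sref).prod γ ∈ Φ :=
      word_root_mem hΦ (fun x hx => hB.subset (ht x hx).1) hγ
    have h1 : ((b :: t).map sref).prod γ = sref b ((t.map sref).prod γ) := by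
      simp [List.map_cons, List.prod_cons]
    rw [h1, c_sref hΦ hB hbΔ htγ hα, if_neg (fun h => hbα h.symm), sub_zero, ih ht γ hγ]

lemma exchange (hΦ : IsRootSystem Φ) (hB : IsBase Φ Δ c) :
    ∀ l : List E, (∀ b ∈ l, b ∈ Δ) → ∀ β, β ∈ Δ → NegR Δ c ((l.map sref).prod β) →
    ∃ l' : List E, (∀ b ∈ l', b ∈ l) ∧ l'.length + 1 = l.length ∧
      (l'.map sref).prod = (l.map sref).prod * sref β := by
  intro l
  induction l with
  | nil =>
    intro _ β hβ hneg
    exact absurd (by simpa using hneg) (simple_not_neg hB hβ)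
  | cons δ t ih =>
    intro hl β hβ hneg
    have hδ : δ ∈ Δ := hl δ (List.mem_cons_self)
    have ht : ∀ b ∈ t, b ∈ Δ := fun x hx => hl x (List.mem_cons_of_mem δ hx)
    set u := (t.map sref).prod with hu
    have huβ : u β ∈ Φ := word_root_mem hΦ (fun x hx => hB.subset (ht x hx)) (hB.subset hβ)
    have hprod : ((δ :: t).map sref).prod = sref δ * u := by simp [List.map_cons, List.prod_cons, hu]
    have hneg' : NegR Δ c (sref δ (u β)) := by
      rw [hprod] at hneg
      exact hneg
    rcases hB.sign _ huβ with hp | hn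
    · -- u β positive, so u β = δ
      have huβδ : u β = δ := by
        by_contra hne
        exact not_pos_and_neg hΦ hB (sref_root_mem hΦ (hB.subset hδ) huβ)
          (sref_simple_pos hΦ hB hδ huβ hp hne) hneg'
      have hc : sref δ = u * sref β * u⁻¹ := by rw [← huβδ]; exact sref_conj u β
      refine ⟨t, fun b hb => List.mem_cons_of_mem δ hb, by simp, ?_⟩
      rw [hprod, hc, mul_assoc (u * sref β), inv_mul_cancel, mul_one, mul_assoc, sref_sq, mul_one]
    · -- u β negative: induction
      obtain ⟨t', ht'mem, ht'len, ht'prod⟩ := ih ht β hβ hn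
      refine ⟨δ :: t', fun b hb => ?_, by simpa using ht'len, ?_⟩
      · rcases List.mem_cons.mp hb with h | h
        · exact h ▸ List.mem_cons_self
        · exact List.mem_cons_of_mem δ (ht'mem b h)
      · rw [hprod]
        simp only [List.map_cons, List.prod_cons, ht'prod]
        rw [mul_assoc]

lemma sref_fix {β x : E} (h : ⟪β, x⟫ = 0) : sref β x = x := by
  have h2 : ⟪x, β⟫ = (0:ℝ) := by rw [real_inner_comm]; exact h
  simp [sref_apply, h2]

lemma word_of_mem {α : E} {w : E ≃ₗᵢ[ℝ] E}
    (hw : w ∈ Subgroup.closure {g : E ≃ₗᵢ[ℝ] E | ∃ b ∈ Δ, b ≠ α ∧ g = sref b}) :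
    ∃ l : List E, (∀ b ∈ l, b ∈ Δ ∧ b ≠ α) ∧ w = (l.map sref).prod := by
  induction hw using Subgroup.closure_induction with
  | mem g hg =>
    obtain ⟨b, hb, hbα, rfl⟩ := hg
    exact ⟨[b], by simp [hb, hbα], by simp⟩
  | one => exact ⟨[], by simp, by simp⟩
  | mul x y hx hy ihx ihy =>
    obtain ⟨lx, hlx, rfl⟩ := ihx
    obtain ⟨ly, hly, rfl⟩ := ihy
    exact ⟨lx ++ ly, fun b hb => (List.mem_append.mp hb).elim (hlx b) (hly b),
      by simp [List.map_append, List.prod_append]⟩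
  | inv x hx ihx =>
    obtain ⟨lx, hlx, rfl⟩ := ihx
    exact ⟨lx.reverse, fun b hb => hlx b (List.mem_reverse.mp hb), word_inv lx⟩

lemma stab_key (hΦ : IsRootSystem Φ) (hB : IsBase Φ Δ c) {α : E} (hα : α ∈ Δ) :
    ∀ n : ℕ, ∀ l : List E, l.length ≤ n → (∀ b ∈ l, b ∈ Δ ∧ b ≠ α) →
    (l.map sref).prod α = α →
    (l.map sref).prod ∈ Subgroup.closure {g : E ≃ₗᵢ[ℝ] E | ∃ b ∈ Δ, ⟪b, α⟫ = 0 ∧ g = sref b} := by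
  intro n
  induction n using Nat.strong_induction_on with
  | _ n IH =>
  intro l hlen hl hfix
  rcases List.eq_nil_or_concat l with rfl | ⟨t, β, rfl⟩
  · simpa using one_mem _
  · simp only [List.concat_eq_append] at hlen hl hfix ⊢
    have hβΔ : β ∈ Δ := (hl β (by simp)).1
    have hβα : β ≠ α := (hl β (by simp)).2
    have ht : ∀ b ∈ t, b ∈ Δ ∧ b ≠ α := fun b hb => hl b (by simp [hb])
    set w := ((t ++ [β]).map sref).prod with hwdef
    have hw : w = (t.map sref).prod * sref β := by
      simp [hwdef, List.map_append, List.prod_append]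
    have hβΦ : β ∈ Φ := hB.subset hβΔ
    have hwβΦ : w β ∈ Φ :=
      word_root_mem hΦ (fun x hx => hB.subset (hl x hx).1) hβΦ
    have hcwβ : c (w β) α = 0 := by
      rw [c_word hΦ hB hα (t ++ [β]) hl β hβΦ, c_simple hB hβΔ hα,
        if_neg (fun h => hβα h.symm)]
    have hlenl : (t ++ [β]).length = t.length + 1 := by simp
    rcases hB.sign _ hwβΦ with hp | hn
    · -- w β positive: u β is negative where u = prod t; shorten by 2
      have hβ0 : β ≠ (0:E) := hΦ.nonzero β hβΦ
      have h1 : w β = - ((t.map sref).prod β) := by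
        rw [hw]
        show (t.map sref).prod (sref β β) = _
        rw [sref_self β hβ0, map_neg]
      have h2 : (t.map sref).prod β = - (w β) := by rw [h1, neg_neg]
      have hneg : NegR Δ c ((t.map sref).prod β) := by
        intro a ha
        rw [h2, c_neg hΦ hB hwβΦ ha]
        exact neg_nonpos.mpr (hp a ha)
      obtain ⟨t', ht'mem, ht'len, ht'prod⟩ :=
        exchange hΦ hB t (fun b hb => (ht b hb).1) β hβΔ hneg
      have ht'w : (t'.map sref).prod = w := by rw [ht'prod, hw]
      have ht'lt : t'.length < n := by
        have : t'.length + 2 ≤ n := by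
          rw [hlenl] at hlen
          omega
        omega
      have := IH t'.length ht'lt t' le_rfl (fun b hb => ht b (ht'mem b hb))
        (by rw [ht'w]; exact hfix)
      rwa [ht'w] at this
    · -- w β negative: dominance gives ⟪α, β⟫ = 0
      have hdom : (0:ℝ) ≤ ⟪α, w β⟫ := by
        have hrep := hB.repr (w β) hwβΦ
        calc (0:ℝ) ≤ ∑ a ∈ Δ, c (w β) a * ⟪α, a⟫ := by
              apply Finset.sum_nonneg
              intro a ha
              by_cases haα : a = α
              · subst haα
                rw [hcwβ, zero_mul]
              · nlinarith [hn a ha, inner_simple_nonpos hΦ hB hα ha haα]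
          _ = ⟪α, w β⟫ := by
              conv_rhs => rw [hrep]
              rw [inner_sum]
              exact Finset.sum_congr rfl fun a _ => (real_inner_smul_right _ _ _).symm
      have heq : ⟪α, w β⟫ = ⟪α, β⟫ := by
        conv_lhs => rw [← hfix]
        exact w.inner_map_map α β
      have hle : ⟪α, β⟫ ≤ 0 := inner_simple_nonpos hΦ hB hα hβΔ hβα
      have hab : ⟪β, α⟫ = 0 := by
        rw [real_inner_comm]
        linarith [heq ▸ hdom]
      have hsβ : sref β ∈ Subgroup.closure
          {g : E ≃ₗᵢ[ℝ] E | ∃ b ∈ Δ, ⟪b, α⟫ = 0 ∧ g = sref b} :=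
        Subgroup.subset_closure ⟨β, hβΔ, hab, rfl⟩
      obtain ⟨l', hl'mem, hl'len, hl'prod⟩ :=
        exchange hΦ hB (t ++ [β]) (fun b hb => (hl b hb).1) β hβΔ hn
      have hl'fix : (l'.map sref).prod α = α := by
        rw [hl'prod]
        show w (sref β α) = α
        rw [sref_fix hab]
        exact hfix
      have hl'lt : l'.length < n := by omega
      have hmem := IH l'.length hl'lt l' le_rfl (fun b hb => hl b (hl'mem b hb)) hl'fix
      rw [hl'prod] at hmem
      have : w = (w * sref β) * sref β := by
        rw [mul_assoc, sref_sq, mul_one]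
      rw [hwdef] at this ⊢
      rw [this]
      exact mul_mem hmem hsβ

lemma orbit_trans (hΦ : IsRootSystem Φ) (hB : IsBase Φ Δ c) {α : E} (hα : α ∈ Δ) :
    ∀ n : ℕ, ∀ γ ∈ Φ, c γ α = 1 → ‖γ‖ = ‖α‖ → (∑ a ∈ Δ.erase α, c γ a) = (n : ℝ) →
    ∃ w ∈ Subgroup.closure {g : E ≃ₗᵢ[ℝ] E | ∃ b ∈ Δ, b ≠ α ∧ g = sref b}, w α = γ := by
  intro n
  induction n using Nat.strong_induction_on with
  | _ n IH =>
  intro γ hγ hc1 hnorm hht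
  by_cases hcase : γ = α
  · exact ⟨1, one_mem _, by simp [hcase]⟩
  have hαΦ : α ∈ Φ := hB.subset hα
  have hα0 : α ≠ (0:E) := hΦ.nonzero α hαΦ
  have hpos : PosR Δ c γ := pos_of_coord_pos hΦ hB hγ hα (by rw [hc1]; norm_num)
  -- find β with positive inner product
  have hβex : ∃ β ∈ Δ, β ≠ α ∧ 0 < ⟪γ, β⟫ := by
    by_contra hcon
    push_neg at hcon
    have hγγ : ⟪γ, γ⟫ = ∑ a ∈ Δ, c γ a * ⟪γ, a⟫ := by
      have h0 : ⟪γ, γ⟫ = ⟪γ, ∑ a ∈ Δ, c γ a • a⟫ :=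
        congrArg (fun z => (⟪γ, z⟫ : ℝ)) (hB.repr γ hγ)
      rw [h0, inner_sum]
      exact Finset.sum_congr rfl fun a _ => real_inner_smul_right _ _ _
    have hsplit : ∑ a ∈ Δ, c γ a * ⟪γ, a⟫
        = c γ α * ⟪γ, α⟫ + ∑ a ∈ Δ.erase α, c γ a * ⟪γ, a⟫ :=
      (Finset.add_sum_erase Δ _ hα).symm
    have hrest : ∑ a ∈ Δ.erase α, c γ a * ⟪γ, a⟫ ≤ 0 := by
      apply Finset.sum_nonpos
      intro a ha
      have haΔ := Finset.mem_of_mem_erase ha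
      have hane : a ≠ α := Finset.ne_of_mem_erase ha
      exact mul_nonpos_of_nonneg_of_nonpos (hpos a haΔ) (hcon a haΔ hane)
    have h1 : ⟪γ, γ⟫ ≤ ⟪γ, α⟫ := by
      rw [hγγ, hsplit, hc1, one_mul]
      linarith
    have h2 : ⟪γ, α⟫ ≤ ‖γ‖ * ‖α‖ := real_inner_le_norm γ α
    have h3 : ‖γ‖ * ‖α‖ = ⟪γ, γ⟫ := by
      rw [real_inner_self_eq_norm_mul_norm, hnorm]
    have heq : ⟪γ, α⟫ = ‖γ‖ * ‖α‖ := le_antisymm h2 (by linarith)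
    have := (inner_eq_norm_mul_iff_real).mp heq
    -- ‖α‖ • γ = ‖γ‖ • α
    apply hcase
    have hα0' : ‖α‖ ≠ 0 := norm_ne_zero_iff.mpr hα0
    have : ‖α‖ • γ = ‖α‖ • α := by rw [this, hnorm]
    exact smul_right_injective E hα0' this
  obtain ⟨β, hβΔ, hβα, hβpos⟩ := hβex
  have hβΦ : β ∈ Φ := hB.subset hβΔ
  have hββ : (0:ℝ) < ⟪β, β⟫ :=
    lt_of_le_of_ne real_inner_self_nonneg (Ne.symm (root_inner_self_ne hΦ hβΦ))
  set k : ℝ := 2 * ⟪γ, β⟫ / ⟪β, β⟫ with hk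
  have hkpos : 0 < k := div_pos (by linarith) hββ
  obtain ⟨kz, hkz⟩ := hΦ.cry β hβΦ γ hγ
  have hkzpos : 0 < kz := by
    have : (0:ℝ) < (kz:ℝ) := by rw [← hkz]; exact hkpos
    exact_mod_cast this
  set γ' := sref β γ with hγ'
  have hγ'Φ : γ' ∈ Φ := sref_root_mem hΦ hβΦ hγ
  have hcγ' : ∀ a ∈ Δ, c γ' a = c γ a - (if a = β then k else 0) := fun a ha =>
    c_sref hΦ hB hβΔ hγ ha
  have hc1' : c γ' α = 1 := by
    rw [hcγ' α hα, if_neg (fun h => hβα h.symm), sub_zero, hc1]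
  have hnorm' : ‖γ'‖ = ‖α‖ := by
    rw [hγ']
    rw [(sref β).norm_map γ]
    exact hnorm
  have hβer : β ∈ Δ.erase α := Finset.mem_erase.mpr ⟨hβα, hβΔ⟩
  have hht' : ∑ a ∈ Δ.erase α, c γ' a = (n:ℝ) - k := by
    rw [Finset.sum_congr rfl (fun a ha => hcγ' a (Finset.mem_of_mem_erase ha))]
    rw [Finset.sum_sub_distrib, hht, Finset.sum_ite_eq' (Δ.erase α) β (fun _ => k),
      if_pos hβer]
  have hpos' : PosR Δ c γ' := pos_of_coord_pos hΦ hB hγ'Φ hα (by rw [hc1']; norm_num)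
  have hsum0 : (0:ℝ) ≤ ∑ a ∈ Δ.erase α, c γ' a :=
    Finset.sum_nonneg fun a ha => hpos' a (Finset.mem_of_mem_erase ha)
  have hkzn : kz.toNat ≤ n := by
    have : (kz:ℝ) ≤ (n:ℝ) := by
      rw [← hkz, ← hk]
      rw [hht'] at hsum0
      linarith
    have : kz ≤ (n:ℤ) := by exact_mod_cast this
    omega
  set m := n - kz.toNat with hm
  have hmlt : m < n := by omega
  have hhtm : ∑ a ∈ Δ.erase α, c γ' a = (m:ℝ) := by
    have hcast : (n:ℝ) - (kz:ℝ) = ((n - kz.toNat : ℕ) : ℝ) := by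
      rw [Nat.cast_sub hkzn]
      congr 1
      exact_mod_cast (Int.toNat_of_nonneg (le_of_lt hkzpos)).symm
    rw [hht', hk.trans hkz, hm]
    exact hcast
  obtain ⟨w', hw'G, hw'α⟩ := IH m hmlt γ' hγ'Φ hc1' hnorm' hhtm
  refine ⟨sref β * w', mul_mem (Subgroup.subset_closure ⟨β, hβΔ, hβα, rfl⟩) hw'G, ?_⟩
  show sref β (w' α) = γ
  rw [hw'α, hγ']
  exact Submodule.reflection_involutive _ γ

lemma word_stable (hΦ : IsRootSystem Φ) (hB : IsBase Φ Δ c) {α : E} {w : E ≃ₗᵢ[ℝ] E}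
    (hw : w ∈ Subgroup.closure {g : E ≃ₗᵢ[ℝ] E | ∃ b ∈ Δ, b ≠ α ∧ g = sref b}) :
    ∀ x ∈ Φ, w x ∈ Φ := by
  obtain ⟨l, hl, rfl⟩ := word_of_mem hw
  exact fun x hx => word_root_mem hΦ (fun b hb => hB.subset (hl b hb).1) hx

lemma G_finite (hΦ : IsRootSystem Φ) (hB : IsBase Φ Δ c) (α : E) :
    Finite ↥(Subgroup.closure {g : E ≃ₗᵢ[ℝ] E | ∃ b ∈ Δ, b ≠ α ∧ g = sref b}) := by
  set G := Subgroup.closure {g : E ≃ₗᵢ[ℝ] E | ∃ b ∈ Δ, b ≠ α ∧ g = sref b} with hG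
  have hstable : ∀ g : ↥G, ∀ x : ↥Φ, (g : E ≃ₗᵢ[ℝ] E) (x : E) ∈ Φ := fun g x =>
    word_stable hΦ hB g.2 x.1 x.2
  have hinj : Function.Injective (fun g : ↥G => (fun x : ↥Φ => (⟨(g : E ≃ₗᵢ[ℝ] E) x, hstable g x⟩ : ↥Φ))) := by
    intro g g' h
    have hfn : ∀ x ∈ Φ, (g : E ≃ₗᵢ[ℝ] E) x = (g' : E ≃ₗᵢ[ℝ] E) x := by
      intro x hx
      have := congrFun h ⟨x, hx⟩
      exact congrArg Subtype.val this
    apply Subtype.ext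
    apply LinearIsometryEquiv.ext
    intro x
    have hlin : ((g : E ≃ₗᵢ[ℝ] E).toLinearEquiv.toLinearMap)
        = ((g' : E ≃ₗᵢ[ℝ] E).toLinearEquiv.toLinearMap) :=
      LinearMap.ext_on hΦ.span_top (fun y hy => hfn y hy)
    exact LinearMap.congr_fun hlin x
  exact Finite.of_injective _ hinj

lemma H_fixes {α : E} :
    ∀ w ∈ Subgroup.closure {g : E ≃ₗᵢ[ℝ] E | ∃ b ∈ Δ, ⟪b, α⟫ = 0 ∧ g = sref b},
    (w : E ≃ₗᵢ[ℝ] E) α = α := by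
  intro w hw
  induction hw using Subgroup.closure_induction with
  | mem x hx =>
    obtain ⟨b, hb, hperp, rfl⟩ := hx
    exact sref_fix hperp
  | one => rfl
  | mul x y hx hy ihx ihy =>
    show x (y α) = α
    rw [ihy, ihx]
  | inv x hx ihx =>
    show x.symm α = α
    conv_lhs => rw [← ihx]
    exact x.symm_apply_apply α

end

theorem stmt18 (Φ Δ : Finset E) (c : E → E → ℝ)
    (hΦ : IsRootSystem Φ) (hB : IsBase Φ Δ c) (hirr : IsIrredSys Φ)
    (α : E) (hα : α ∈ Δ) :
    {γ : E | γ ∈ Φ ∧ c γ α = 1 ∧ ‖γ‖ = ‖α‖}.ncard =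
      Nat.card (Subgroup.closure {g : E ≃ₗᵢ[ℝ] E | ∃ b ∈ Δ, b ≠ α ∧ g = sref b}) /
      Nat.card (Subgroup.closure
        {g : E ≃ₗᵢ[ℝ] E | ∃ b ∈ Δ, ⟪b, α⟫ = 0 ∧ g = sref b}) := by
  classical
  have hαΦ : α ∈ Φ := hB.subset hα
  haveI hGfin : Finite ↥(Subgroup.closure {g : E ≃ₗᵢ[ℝ] E | ∃ b ∈ Δ, b ≠ α ∧ g = sref b}) :=
    G_finite hΦ hB α
  have hS21 : {g : E ≃ₗᵢ[ℝ] E | ∃ b ∈ Δ, ⟪b, α⟫ = 0 ∧ g = sref b}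
      ⊆ {g : E ≃ₗᵢ[ℝ] E | ∃ b ∈ Δ, b ≠ α ∧ g = sref b} := by
    rintro g ⟨b, hb, hperp, rfl⟩
    refine ⟨b, hb, ?_, rfl⟩
    rintro rfl
    exact root_inner_self_ne hΦ hαΦ hperp
  have hHG : Subgroup.closure {g : E ≃ₗᵢ[ℝ] E | ∃ b ∈ Δ, ⟪b, α⟫ = 0 ∧ g = sref b}
      ≤ Subgroup.closure {g : E ≃ₗᵢ[ℝ] E | ∃ b ∈ Δ, b ≠ α ∧ g = sref b} :=
    Subgroup.closure_mono hS21
  haveI hHfin : Finite ↥(Subgroup.closure {g : E ≃ₗᵢ[ℝ] E | ∃ b ∈ Δ, ⟪b, α⟫ = 0 ∧ g = sref b}) :=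
    Finite.of_injective (Subgroup.inclusion hHG) (Subgroup.inclusion_injective hHG)
  -- the set is the orbit of α
  have hset : {γ : E | γ ∈ Φ ∧ c γ α = 1 ∧ ‖γ‖ = ‖α‖}
      = MulAction.orbit ↥(Subgroup.closure {g : E ≃ₗᵢ[ℝ] E | ∃ b ∈ Δ, b ≠ α ∧ g = sref b}) α := by
    ext γ
    constructor
    · rintro ⟨hγ, hc1, hnorm⟩
      have hpos : PosR Δ c γ := pos_of_coord_pos hΦ hB hγ hα (by rw [hc1]; norm_num)
      have hints : ∀ (s : Finset E), s ⊆ Δ.erase α →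
          ∃ N : ℤ, ∑ a ∈ s, c γ a = (N:ℝ) := by
        intro s
        induction s using Finset.induction_on with
        | empty => exact fun _ => ⟨0, by simp⟩
        | insert x t hnotmem ih =>
          intro hsub
          obtain ⟨z, hz⟩ := hB.int γ hγ x
            (Finset.mem_of_mem_erase (hsub (Finset.mem_insert_self x t)))
          obtain ⟨N, hN⟩ := ih (fun a ha => hsub (Finset.mem_insert_of_mem ha))
          refine ⟨z + N, ?_⟩
          rw [Finset.sum_insert hnotmem, hz, hN]
          push_cast
          ring
      obtain ⟨N, hN⟩ := hints (Δ.erase α) (le_refl _)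
      have hN0 : 0 ≤ N := by
        have : (0:ℝ) ≤ (N:ℝ) := by
          rw [← hN]
          exact Finset.sum_nonneg fun a ha => hpos a (Finset.mem_of_mem_erase ha)
        exact_mod_cast this
      obtain ⟨w, hwG, hwα⟩ := orbit_trans hΦ hB hα N.toNat γ hγ hc1 hnorm
        (by rw [hN]; congr 1; exact_mod_cast (Int.toNat_of_nonneg hN0).symm)
      exact ⟨⟨w, hwG⟩, hwα⟩
    · rintro ⟨g, rfl⟩
      obtain ⟨l, hl, hleq⟩ := word_of_mem g.2
      have hgα : (g : E ≃ₗᵢ[ℝ] E) • α = (l.map sref).prod α := by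
        rw [st18_smul_def, hleq]
      refine ⟨?_, ?_, ?_⟩
      · show (g : E ≃ₗᵢ[ℝ] E) • α ∈ Φ
        rw [hgα]
        exact word_root_mem hΦ (fun b hb => hB.subset (hl b hb).1) hαΦ
      · show c ((g : E ≃ₗᵢ[ℝ] E) • α) α = 1
        rw [hgα, c_word hΦ hB hα l hl α hαΦ, c_simple hB hα hα, if_pos rfl]
      · show ‖(g : E ≃ₗᵢ[ℝ] E) • α‖ = ‖α‖
        rw [st18_smul_def]
        exact (g : E ≃ₗᵢ[ℝ] E).norm_map α
  rw [hset, ← Nat.card_coe_set_eq,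
    Nat.card_congr (MulAction.orbitEquivQuotientStabilizer
      ↥(Subgroup.closure {g : E ≃ₗᵢ[ℝ] E | ∃ b ∈ Δ, b ≠ α ∧ g = sref b}) α)]
  have hstab : MulAction.stabilizer
      ↥(Subgroup.closure {g : E ≃ₗᵢ[ℝ] E | ∃ b ∈ Δ, b ≠ α ∧ g = sref b}) α
      = (Subgroup.closure {g : E ≃ₗᵢ[ℝ] E | ∃ b ∈ Δ, ⟪b, α⟫ = 0 ∧ g = sref b}).subgroupOf
        (Subgroup.closure {g : E ≃ₗᵢ[ℝ] E | ∃ b ∈ Δ, b ≠ α ∧ g = sref b}) := by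
    ext g
    rw [MulAction.mem_stabilizer_iff, Subgroup.mem_subgroupOf]
    constructor
    · intro hg
      obtain ⟨l, hl, hleq⟩ := word_of_mem g.2
      have hfix : (l.map sref).prod α = α := by
        rw [← hleq]
        exact hg
      have := stab_key hΦ hB hα l.length l le_rfl hl hfix
      rw [← hleq] at this
      exact this
    · intro hg
      exact H_fixes (g : E ≃ₗᵢ[ℝ] E) hg
  have hcard : Nat.card ↥(MulAction.stabilizer
      ↥(Subgroup.closure {g : E ≃ₗᵢ[ℝ] E | ∃ b ∈ Δ, b ≠ α ∧ g = sref b}) α)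
      = Nat.card ↥(Subgroup.closure {g : E ≃ₗᵢ[ℝ] E | ∃ b ∈ Δ, ⟪b, α⟫ = 0 ∧ g = sref b}) := by
    rw [hstab]
    exact Nat.card_congr (Subgroup.subgroupOfEquivOfLe hHG).toEquiv
  have hlag := Subgroup.card_eq_card_quotient_mul_card_subgroup (MulAction.stabilizer
      ↥(Subgroup.closure {g : E ≃ₗᵢ[ℝ] E | ∃ b ∈ Δ, b ≠ α ∧ g = sref b}) α)
  have hHpos : 0 < Nat.card
      ↥(Subgroup.closure {g : E ≃ₗᵢ[ℝ] E | ∃ b ∈ Δ, ⟪b, α⟫ = 0 ∧ g = sref b}) :=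
    Nat.card_pos
  exact (Nat.div_eq_of_eq_mul_left hHpos (by rw [hlag, hcard])).symm
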